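/- For any homogeneous ideal I in K[x_1,...,x_n], the union over all term orders of the reduced Gröbner bases of I is a universal Gröbner basis of I (it is a Gröbner basis with respect to every term order), and it is finite. -/

import Mathlib

open MvPolynomial

universe w

variable {n : ℕ} {K : Type*} [Field K]

/-- The leading exponent (multidegree) of a polynomial with respect to a
monomial order. -/
noncomputable def leadExp (m : MonomialOrder (Fin n)) (p : MvPolynomial (Fin n) K) :
    Fin n →₀ ℕ :=
  m.toSyn.symm (p.support.sup (⇑m.toSyn))

/-- `G` is a Gröbner basis of the ideal `I` with respect to the monomial order
`m`. -/
def IsGroebnerBasis (m : MonomialOrder (Fin n)) (I : Ideal (MvPolynomial (Fin n) K))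
    (G : Finset (MvPolynomial (Fin n) K)) : Prop :=
  ↑G ⊆ (I : Set (MvPolynomial (Fin n) K)) ∧ Ideal.span ↑G = I ∧
    ∀ f ∈ I, f ≠ 0 → ∃ g ∈ G, g ≠ 0 ∧ leadExp m g ≤ leadExp m f

/-- `G` is the reduced Gröbner basis of `I` with respect to `m`: a Gröbner
basis of monic polynomials such that no monomial occurring in an element of `G`
is divisible by the leading monomial of another element of `G`. -/
def IsReducedGroebnerBasis (m : MonomialOrder (Fin n))
    (I : Ideal (MvPolynomial (Fin n) K)) (G : Finset (MvPolynomial (Fin n) K)) : Prop :=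
  IsGroebnerBasis m I G ∧
    (∀ g ∈ G, coeff (leadExp m g) g = 1) ∧
    ∀ g ∈ G, ∀ g' ∈ G, g ≠ g' → ∀ e ∈ g.support, ¬ leadExp m g' ≤ e

/-! ### Auxiliary lemmas about `leadExp` -/

lemma leadExp_mem {m : MonomialOrder (Fin n)} {p : MvPolynomial (Fin n) K} (hp : p ≠ 0) :
    leadExp m p ∈ p.support := by
  obtain ⟨e, he, h⟩ := p.support.exists_mem_eq_sup (by simpa using hp) (⇑m.toSyn)
  simpa [leadExp, h] using he

lemma le_toSyn_leadExp {m : MonomialOrder (Fin n)} {p : MvPolynomial (Fin n) K} {e : Fin n →₀ ℕ}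
    (he : e ∈ p.support) : m.toSyn e ≤ m.toSyn (leadExp m p) := by
  simpa [leadExp] using Finset.le_sup (f := ⇑m.toSyn) he

lemma leadExp_eq_of {m : MonomialOrder (Fin n)} {p : MvPolynomial (Fin n) K} {e : Fin n →₀ ℕ}
    (he : e ∈ p.support) (hmax : ∀ x ∈ p.support, m.toSyn x ≤ m.toSyn e) :
    leadExp m p = e := by
  have hp : p ≠ 0 := by
    intro h; subst h; simp at he
  have h1 : m.toSyn e ≤ m.toSyn (leadExp m p) := le_toSyn_leadExp he
  have h2 : m.toSyn (leadExp m p) ≤ m.toSyn e := hmax _ (leadExp_mem hp)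
  exact m.toSyn.injective (le_antisymm h2 h1)

lemma eq_leadExp_of_mem_of_le {m : MonomialOrder (Fin n)} {p : MvPolynomial (Fin n) K}
    {x : Fin n →₀ ℕ} (hx : x ∈ p.support) (hle : leadExp m p ≤ x) : x = leadExp m p := by
  have h1 : m.toSyn x ≤ m.toSyn (leadExp m p) := le_toSyn_leadExp hx
  have h2 : m.toSyn (leadExp m p) ≤ m.toSyn x := m.toSyn_monotone hle
  exact m.toSyn.injective (le_antisymm h1 h2)


/-- Transfer a monomial order to an arbitrary universe. -/
noncomputable def transferOrder (m : MonomialOrder (Fin n)) : MonomialOrder.{0, w} (Fin n) :=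
  letI S := ULift.{w} (Fin n →₀ ℕ)
  letI f : S → m.syn := fun x => m.toSyn x.down
  haveI hf : Function.Injective f :=
    fun a b h => ULift.down_injective (m.toSyn.injective h)
  letI : Zero S := ⟨⟨0⟩⟩
  letI : Add S := ⟨fun a b => ⟨a.down + b.down⟩⟩
  letI : SMul ℕ S := ⟨fun k x => ⟨k • x.down⟩⟩
  letI : Max S := ⟨fun a b => if f a ≤ f b then b else a⟩
  letI : Min S := ⟨fun a b => if f a ≤ f b then a else b⟩
  letI acm : AddCommMonoid S :=
    hf.addCommMonoid f (map_zero m.toSyn)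
      (fun x y => map_add m.toSyn _ _)
      (fun x k => by exact map_nsmul m.toSyn.toAddMonoidHom _ _)
  letI lo : LinearOrder S := LinearOrder.lift' f hf
  { syn := S
    addCommMonoidSyn := acm
    linearOrderSyn := lo
    isOrderedAddMonoid_syn :=
      @IsOrderedAddMonoid.mk S acm lo.toPartialOrder.toPreorder
        (fun a b h c => by
          show m.toSyn (a.down + c.down) ≤ m.toSyn (b.down + c.down)
          rw [map_add, map_add]
          exact add_le_add_left (show m.toSyn a.down ≤ m.toSyn b.down from h) _)
        (fun a b h c => by
          show m.toSyn (c.down + a.down) ≤ m.toSyn (c.down + b.down)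
          rw [map_add, map_add]
          exact add_le_add_right (show m.toSyn a.down ≤ m.toSyn b.down from h) _)
    toSyn :=
      { toFun := fun x => ⟨x⟩
        invFun := ULift.down
        left_inv := fun _ => rfl
        right_inv := fun _ => rfl
        map_add' := fun _ _ => rfl }
    toSyn_monotone := fun a b h => m.toSyn_monotone h
    wellFoundedLT_syn := ⟨InvImage.wf f m.wellFoundedLT_syn.wf⟩ }

lemma leadExp_transferOrder {m : MonomialOrder (Fin n)} {p : MvPolynomial (Fin n) K}
    (hp : p ≠ 0) : leadExp (transferOrder.{w} m) p = leadExp m p := by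
  apply leadExp_eq_of (leadExp_mem hp)
  intro x hx
  exact le_toSyn_leadExp hx

/-- The "initial-ideal" staircase determined by a finite set of polynomials with
respect to a monomial order. -/
def LTs (m : MonomialOrder (Fin n)) (A : Finset (MvPolynomial (Fin n) K)) :
    Set (Fin n →₀ ℕ) :=
  {x | ∃ g ∈ A, g ≠ 0 ∧ leadExp m g ≤ x}

/-- Reduction modulo a staircase: any nonzero `f ∈ I` whose leading exponent is not
in the staircase generated by `E` can be reduced to some `r ∈ I` with the same leading
exponent and support disjoint from the staircase. -/
lemma reduce (m₀ : MonomialOrder (Fin n)) (I : Ideal (MvPolynomial (Fin n) K))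
    (E : Finset (Fin n →₀ ℕ))
    (hE : ∀ e ∈ E, ∃ q ∈ I, q ≠ 0 ∧ leadExp m₀ q = e) :
    ∀ f ∈ I, f ≠ 0 → (∀ e ∈ E, ¬ e ≤ leadExp m₀ f) →
      ∃ r ∈ I, r ≠ 0 ∧ leadExp m₀ r = leadExp m₀ f ∧
        ∀ x ∈ r.support, ∀ e ∈ E, ¬ e ≤ x := by
  classical
  suffices H : ∀ s : m₀.syn, ∀ f ∈ I, f ≠ 0 → (∀ e ∈ E, ¬ e ≤ leadExp m₀ f) →
      (f.support.filter fun x => ∃ e ∈ E, e ≤ x).sup ⇑m₀.toSyn = s →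
      ∃ r ∈ I, r ≠ 0 ∧ leadExp m₀ r = leadExp m₀ f ∧
        ∀ x ∈ r.support, ∀ e ∈ E, ¬ e ≤ x by
    intro f hfI hf0 hlead
    exact H _ f hfI hf0 hlead rfl
  intro s
  induction s using WellFoundedLT.induction with
  | _ s IH =>
  intro f hfI hf0 hlead hs
  by_cases hdisj : ∀ x ∈ f.support, ∀ e ∈ E, ¬ e ≤ x
  · exact ⟨f, hfI, hf0, rfl, hdisj⟩
  -- the filter is nonempty
  push_neg at hdisj
  obtain ⟨x₀, hx₀, e₀, he₀E, he₀x₀⟩ := hdisj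
  have hne : (f.support.filter fun x => ∃ e ∈ E, e ≤ x).Nonempty :=
    ⟨x₀, Finset.mem_filter.mpr ⟨hx₀, e₀, he₀E, he₀x₀⟩⟩
  obtain ⟨e, he, hesup⟩ := Finset.exists_mem_eq_sup _ hne (⇑m₀.toSyn)
  rw [hesup] at hs
  obtain ⟨hesupp, ei, heiE, heile⟩ := Finset.mem_filter.mp he
  obtain ⟨q, hqI, hq0, hqlead⟩ := hE ei heiE
  -- `e` is not the leading exponent of `f`
  have hene : e ≠ leadExp m₀ f := by
    intro h; exact hlead ei heiE (h ▸ heile)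
  have helt : m₀.toSyn e < m₀.toSyn (leadExp m₀ f) :=
    lt_of_le_of_ne (le_toSyn_leadExp hesupp) (fun h => hene (m₀.toSyn.injective h))
  set d : Fin n →₀ ℕ := e - ei with hd
  have hde : d + ei = e := tsub_add_cancel_of_le heile
  have hcq : coeff ei q ≠ 0 := by
    have := leadExp_mem (m := m₀) hq0
    rw [hqlead] at this
    exact mem_support_iff.mp this
  set c : K := coeff e f / coeff ei q with hc
  set u : MvPolynomial (Fin n) K := monomial d c * q with hu
  -- support of u
  have hsubu : ∀ x ∈ u.support, ∃ y ∈ q.support, x = d + y := by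
    intro x hx
    have := support_mul (monomial d c) q hx
    rw [Finset.mem_add] at this
    obtain ⟨a, ha, b, hb, hab⟩ := this
    have : a = d := by
      by_cases hc0 : c = 0
      · simp [hc0, support_monomial] at ha
      · simpa [support_monomial, hc0] using ha
    exact ⟨b, hb, by rw [← hab, this]⟩
  have hsynu : ∀ x ∈ u.support, m₀.toSyn x ≤ m₀.toSyn e ∧ (m₀.toSyn x = m₀.toSyn e → x = e) := by
    intro x hx
    obtain ⟨y, hy, rfl⟩ := hsubu x hx
    have hyq : m₀.toSyn y ≤ m₀.toSyn ei := by
      have := le_toSyn_leadExp (m := m₀) hy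
      rwa [hqlead] at this
    constructor
    · calc m₀.toSyn (d + y) = m₀.toSyn d + m₀.toSyn y := by rw [map_add]
        _ ≤ m₀.toSyn d + m₀.toSyn ei := by exact add_le_add_right hyq _
        _ = m₀.toSyn (d + ei) := by rw [map_add]
        _ = m₀.toSyn e := by rw [hde]
    · intro hxeq
      have : m₀.toSyn d + m₀.toSyn y = m₀.toSyn d + m₀.toSyn ei := by
        rw [← map_add, hxeq, ← hde, map_add]
      have hyei : y = ei := m₀.toSyn.injective (by exact add_left_cancel this)
      rw [hyei, hde]
  set f' : MvPolynomial (Fin n) K := f - u with hf'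
  have hf'I : f' ∈ I := Ideal.sub_mem I hfI (Ideal.mul_mem_left I _ hqI)
  -- coefficient of f' at e vanishes
  have hcoeffe : coeff e f' = 0 := by
    have : coeff e u = c * coeff ei q := by
      rw [hu, ← hde, coeff_monomial_mul]
    rw [hf', coeff_sub, this, hc, div_mul_cancel₀ _ hcq, sub_self]
  -- coefficient of f' at leading exponent of f is unchanged
  have hulead : coeff (leadExp m₀ f) u = 0 := by
    by_contra hcu
    have hmem : leadExp m₀ f ∈ u.support := mem_support_iff.mpr hcu
    have := (hsynu _ hmem).1
    exact absurd (lt_of_le_of_lt this helt) (lt_irrefl _)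
  have hcoefflead : coeff (leadExp m₀ f) f' = coeff (leadExp m₀ f) f := by
    rw [hf', coeff_sub, hulead, sub_zero]
  have hleadmem : leadExp m₀ f ∈ f'.support := by
    rw [mem_support_iff, hcoefflead]
    exact mem_support_iff.mp (leadExp_mem hf0)
  have hf'0 : f' ≠ 0 := by
    intro h; rw [h] at hleadmem; simp at hleadmem
  have hsuppf' : ∀ x ∈ f'.support, m₀.toSyn x ≤ m₀.toSyn (leadExp m₀ f) := by
    intro x hx
    have := support_sub (Fin n) f u hx
    rw [Finset.mem_union] at this
    rcases this with h | h
    · exact le_toSyn_leadExp h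
    · exact le_trans ((hsynu x h).1) (le_of_lt helt)
  have hleadf' : leadExp m₀ f' = leadExp m₀ f := leadExp_eq_of hleadmem hsuppf'
  -- measure decreases
  have hmeas : (f'.support.filter fun x => ∃ e' ∈ E, e' ≤ x).sup ⇑m₀.toSyn < s := by
    rw [← hs]
    have hepos : (⊥ : m₀.syn) < m₀.toSyn e := by
      rcases eq_or_lt_of_le (bot_le : (⊥ : m₀.syn) ≤ m₀.toSyn e) with h | h
      · exfalso
        have he0 : e = 0 := by
          apply m₀.toSyn.injective
          rw [← h, m₀.bot_eq_zero, map_zero]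
        rw [he0] at heile
        have : ei = 0 := le_antisymm heile zero_le
        exact hlead ei heiE (this ▸ zero_le)
      · exact h
    rw [Finset.sup_lt_iff hepos]
    intro x hx
    obtain ⟨hxsupp, e', he'E, he'x⟩ := Finset.mem_filter.mp hx
    have hxne : x ≠ e := by
      intro h
      rw [h] at hxsupp
      exact mem_support_iff.mp hxsupp hcoeffe
    have := support_sub (Fin n) f u hxsupp
    rw [Finset.mem_union] at this
    rcases this with h | h
    · have hxf : x ∈ f.support.filter fun x => ∃ e ∈ E, e ≤ x :=
        Finset.mem_filter.mpr ⟨h, e', he'E, he'x⟩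
      have := Finset.le_sup (f := ⇑m₀.toSyn) hxf
      rw [hesup] at this
      exact lt_of_le_of_ne this (fun hh => hxne (m₀.toSyn.injective hh))
    · obtain ⟨hle, heq⟩ := hsynu x h
      exact lt_of_le_of_ne hle (fun hh => hxne (heq hh))
  obtain ⟨r, hrI, hr0, hrl, hrs⟩ := IH _ hmeas f' hf'I hf'0 (by rw [hleadf']; exact hlead) rfl
  exact ⟨r, hrI, hr0, by rw [hrl, hleadf'], hrs⟩

/-- Elements of the support of a member of a reduced Gröbner basis lying in the
staircase must be the leading exponent. -/
lemma mem_LT_support {m : MonomialOrder (Fin n)} {I : Ideal (MvPolynomial (Fin n) K)}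
    {A : Finset (MvPolynomial (Fin n) K)} (hA : IsReducedGroebnerBasis m I A)
    {g : MvPolynomial (Fin n) K} (hg : g ∈ A) {x : Fin n →₀ ℕ} (hx : x ∈ g.support)
    (hxL : x ∈ LTs m A) : x = leadExp m g := by
  obtain ⟨a, haA, _, hax⟩ := hxL
  have hag : a = g := by
    by_contra hne
    exact hA.2.2 g hg a haA (fun h => hne h.symm) x hx hax
  rw [hag] at hax
  exact eq_leadExp_of_mem_of_le hx hax

lemma zero_not_mem_reduced {m : MonomialOrder (Fin n)} {I : Ideal (MvPolynomial (Fin n) K)}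
    {A : Finset (MvPolynomial (Fin n) K)} (hA : IsReducedGroebnerBasis m I A) :
    (0 : MvPolynomial (Fin n) K) ∉ A := by
  intro h0
  have := hA.2.1 0 h0
  simp at this

/-- Uniqueness of the reduced Gröbner basis given the staircase. -/
lemma reduced_subset {m m' : MonomialOrder (Fin n)} {I : Ideal (MvPolynomial (Fin n) K)}
    {A B : Finset (MvPolynomial (Fin n) K)}
    (hA : IsReducedGroebnerBasis m I A) (hB : IsReducedGroebnerBasis m' I B)
    (h : LTs m A = LTs m' B) : A ⊆ B := by
  intro g hg
  have hg0 : g ≠ 0 := fun hh => zero_not_mem_reduced hA (hh ▸ hg)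
  have hEl : leadExp m g ∈ LTs m A := ⟨g, hg, hg0, le_refl _⟩
  rw [h] at hEl
  obtain ⟨g', hg'B, hg'0, hle'⟩ := hEl
  have h2 : leadExp m' g' ∈ LTs m' B := ⟨g', hg'B, hg'0, le_refl _⟩
  rw [← h] at h2
  obtain ⟨a, haA, ha0, hale⟩ := h2
  have hag : a = g := by
    by_contra hne
    exact hA.2.2 g hg a haA (fun hh => hne hh.symm) (leadExp m g) (leadExp_mem hg0)
      (hale.trans hle')
  rw [hag] at hale
  have heq : leadExp m' g' = leadExp m g := le_antisymm hle' hale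
  have hcg : coeff (leadExp m g) g = 1 := hA.2.1 g hg
  have hcg' : coeff (leadExp m g) g' = 1 := by
    have := hB.2.1 g' hg'B
    rwa [heq] at this
  suffices hgg' : g = g' by rw [hgg']; exact hg'B
  by_contra hne
  have hne0 : g - g' ≠ 0 := sub_ne_zero.mpr hne
  have hdI : g - g' ∈ I := Ideal.sub_mem I (hA.1.1 hg) (hB.1.1 hg'B)
  obtain ⟨b, hbA, hb0, hble⟩ := hA.1.2.2 (g - g') hdI hne0
  set x := leadExp m (g - g') with hxdef
  have hx : x ∈ (g - g').support := leadExp_mem hne0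
  have hxLT : x ∈ LTs m A := ⟨b, hbA, hb0, hble⟩
  have hxe : x ≠ leadExp m g := by
    intro hh
    have : coeff (leadExp m g) (g - g') = 0 := by
      rw [coeff_sub, hcg, hcg', sub_self]
    rw [hh] at hx
    exact mem_support_iff.mp hx this
  have hxsupp := support_sub (Fin n) g g' hx
  rw [Finset.mem_union] at hxsupp
  rcases hxsupp with hxg | hxg'
  · exact hxe (mem_LT_support hA hg hxg hxLT)
  · rw [h] at hxLT
    have := mem_LT_support hB hg'B hxg' hxLT
    rw [heq] at this
    exact hxe this

/-- Finiteness of the set of staircases (the key content of the Gröbner fan). -/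
lemma LT_range_finite (I : Ideal (MvPolynomial (Fin n) K))
    (G : MonomialOrder (Fin n) → Finset (MvPolynomial (Fin n) K))
    (hG : ∀ m, IsReducedGroebnerBasis m I (G m)) :
    (Set.range fun m => LTs m (G m)).Finite := by
  classical
  by_contra hinf
  rw [← Set.not_infinite, not_not] at hinf
  set LTf := fun m => LTs (K := K) m (G m) with hLTf
  -- invariant for the recursion
  set P : Set (MonomialOrder (Fin n)) → Finset (Fin n →₀ ℕ) → Prop :=
    fun S E => (LTf '' S).Infinite ∧ ∀ m ∈ S, ∀ e ∈ E, ∃ q ∈ I, q ≠ 0 ∧ leadExp m q = e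
    with hP
  have step : ∀ S E, P S E → ∃ S' e, S' ⊆ S ∧ (∀ e' ∈ E, ¬ e' ≤ e) ∧ P S' (insert e E) := by
    intro S E ⟨hSinf, hinv⟩
    set ST : Set (Fin n →₀ ℕ) := {x | ∃ e ∈ E, e ≤ x} with hST
    -- some order in S has staircase different from ST
    have hexists : ∃ m₀ ∈ S, LTf m₀ ≠ ST := by
      by_contra hall
      push_neg at hall
      apply hSinf
      apply Set.Finite.subset (Set.finite_singleton ST)
      rintro _ ⟨m, hm, rfl⟩
      exact hall m hm
    obtain ⟨m₀, hm₀S, hm₀ne⟩ := hexists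
    have hSTsub : ST ⊆ LTf m₀ := by
      rintro x ⟨e, heE, hex⟩
      obtain ⟨q, hqI, hq0, hql⟩ := hinv m₀ hm₀S e heE
      obtain ⟨g, hgG, hg0, hgl⟩ := (hG m₀).1.2.2 q hqI hq0
      exact ⟨g, hgG, hg0, le_trans (hql ▸ hgl) hex⟩
    have : ¬ LTf m₀ ⊆ ST := fun hh => hm₀ne (subset_antisymm hh hSTsub)
    rw [Set.not_subset] at this
    obtain ⟨x, hxLT, hxST⟩ := this
    obtain ⟨g, hgG, hg0, hgx⟩ := hxLT
    have hgI : g ∈ I := (hG m₀).1.1 hgG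
    have hglead : ∀ e ∈ E, ¬ e ≤ leadExp m₀ g := by
      intro e heE hle
      exact hxST ⟨e, heE, hle.trans hgx⟩
    obtain ⟨r, hrI, hr0, _, hrs⟩ := reduce m₀ I E (hinv m₀ hm₀S) g hgI hg0 hglead
    -- pigeonhole over the support of r
    have hcover : LTf '' S ⊆ ⋃ e ∈ r.support, LTf '' {m ∈ S | leadExp m r = e} := by
      rintro _ ⟨m, hm, rfl⟩
      exact Set.mem_biUnion (leadExp_mem hr0) ⟨m, ⟨hm, rfl⟩, rfl⟩
    have hfib : ∃ e ∈ r.support, (LTf '' {m ∈ S | leadExp m r = e}).Infinite := by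
      by_contra hall
      push_neg at hall
      exact hSinf (Set.Finite.subset
        (Set.Finite.biUnion r.support.finite_toSet (fun e he => hall e he)) hcover)
    obtain ⟨er, herS, herInf⟩ := hfib
    refine ⟨{m ∈ S | leadExp m r = er}, er, fun m hm => hm.1, fun e' he' hle => hrs er herS e' he' hle, herInf, ?_⟩
    intro m hm e heE
    rcases Finset.mem_insert.mp heE with rfl | heE'
    · exact ⟨r, hrI, hr0, hm.2⟩
    · exact hinv m hm.1 e heE'
  -- build the chain
  set T := {p : Set (MonomialOrder (Fin n)) × Finset (Fin n →₀ ℕ) // P p.1 p.2} with hT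
  have t0 : T := ⟨(Set.univ, ∅), by
    constructor
    · rw [Set.image_univ]; exact hinf
    · intro m _ e he; simp at he⟩
  have stepT : ∀ p : T, ∃ q : T, ∃ e, q.1.2 = insert e p.1.2 ∧ ∀ e' ∈ p.1.2, ¬ e' ≤ e := by
    rintro ⟨⟨S, E⟩, hp⟩
    obtain ⟨S', e, _, hfresh, hP'⟩ := step S E hp
    exact ⟨⟨(S', insert e E), hP'⟩, e, rfl, hfresh⟩
  set seq : ℕ → T := fun k => Nat.rec t0 (fun _ p => (stepT p).choose) k with hseq
  have hseqsucc : ∀ k, ∃ e, (seq (k + 1)).1.2 = insert e (seq k).1.2 ∧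
      ∀ e' ∈ (seq k).1.2, ¬ e' ≤ e := fun k => (stepT (seq k)).choose_spec
  set M : ℕ → Ideal (MvPolynomial (Fin n) K) :=
    fun k => Ideal.span ((fun e => monomial e (1 : K)) '' ((seq k).1.2 : Set (Fin n →₀ ℕ)))
    with hM
  have hMmono : ∀ k, M k ≤ M (k + 1) := by
    intro k
    obtain ⟨e, hins, _⟩ := hseqsucc k
    apply Ideal.span_mono
    apply Set.image_mono
    rw [hins]
    intro x hx
    simp only [Finset.coe_insert, Set.mem_insert_iff]
    exact Or.inr hx
  have hMstrict : ∀ k, M k ≠ M (k + 1) := by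
    intro k heq
    obtain ⟨e, hins, hfresh⟩ := hseqsucc k
    have hmem : monomial e (1 : K) ∈ M (k + 1) := by
      apply Ideal.subset_span
      exact ⟨e, by rw [hins]; simp, rfl⟩
    rw [← heq] at hmem
    rw [hM] at hmem
    rw [mem_ideal_span_monomial_image] at hmem
    have := hmem e (by rw [support_monomial]; simp)
    obtain ⟨si, hsi, hsile⟩ := this
    exact hfresh si hsi hsile
  have hmono : Monotone M := monotone_nat_of_le_succ hMmono
  obtain ⟨k, hk⟩ := monotone_stabilizes_iff_noetherian.mpr inferInstance ⟨M, hmono⟩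
  exact hMstrict k (hk (k + 1) (Nat.le_succ k) : M k = M (k + 1))

/-- The union over all monomial orders of the reduced Gröbner bases of a
homogeneous ideal `I` is finite and is a Gröbner basis of `I` with respect to
every monomial order, i.e. a universal Gröbner basis. -/
theorem union_reduced_groebner_bases_universal
    (I : Ideal (MvPolynomial (Fin n) K))
    (hIhom : ∀ f ∈ I, ∀ d : ℕ, homogeneousComponent d f ∈ I)
    (G : MonomialOrder (Fin n) → Finset (MvPolynomial (Fin n) K))
    (hG : ∀ m, IsReducedGroebnerBasis m I (G m)) :
    ∃ U : Finset (MvPolynomial (Fin n) K),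
      (↑U : Set (MvPolynomial (Fin n) K)) = ⋃ m : MonomialOrder (Fin n), ↑(G m) ∧
      ∀ m : MonomialOrder (Fin n), IsGroebnerBasis m I U := by
  classical
  set LTf := fun m => LTs (K := K) m (G m) with hLTf
  have hfin : (Set.range LTf).Finite := LT_range_finite I G hG
  have huniq : ∀ m m', LTf m = LTf m' → G m = G m' := fun m m' h =>
    Finset.Subset.antisymm (reduced_subset (hG m) (hG m') h)
      (reduced_subset (hG m') (hG m) h.symm)
  have hrange : (Set.range G).Finite := by
    haveI := hfin.to_subtype
    apply Set.Finite.subset (Set.finite_range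
      (fun s : ↥(Set.range LTf) => G s.2.choose))
    rintro _ ⟨m, rfl⟩
    refine ⟨⟨LTf m, ⟨m, rfl⟩⟩, ?_⟩
    exact huniq _ _ (Exists.choose_spec (⟨m, rfl⟩ : ∃ m', LTf m' = LTf m))
  have hU : (⋃ m, ((G m : Set (MvPolynomial (Fin n) K)))).Finite := by
    rw [← Set.biUnion_range (f := G) (g := fun F => (F : Set (MvPolynomial (Fin n) K)))]
    exact hrange.biUnion (fun F _ => F.finite_toSet)
  refine ⟨hU.toFinset, by simp, ?_⟩
  intro m
  have hsubU : ∀ m', (G m' : Set (MvPolynomial (Fin n) K)) ⊆ ↑hU.toFinset := by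
    intro m' x hx
    rw [Set.Finite.coe_toFinset]
    exact Set.mem_iUnion.mpr ⟨m', hx⟩
  have hUI : (↑hU.toFinset : Set (MvPolynomial (Fin n) K)) ⊆ ↑I := by
    intro x hx
    rw [Set.Finite.coe_toFinset] at hx
    obtain ⟨s, ⟨m', rfl⟩, hxs⟩ := hx
    exact (hG m').1.1 hxs
  refine ⟨hUI, ?_, ?_⟩
  · apply le_antisymm
    · exact Ideal.span_le.mpr hUI
    · rw [← (hG (transferOrder m)).1.2.1]
      exact Ideal.span_mono (hsubU (transferOrder m))
  · intro f hf hf0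
    obtain ⟨g, hgG, hg0, hgl⟩ := (hG (transferOrder m)).1.2.2 f hf hf0
    rw [leadExp_transferOrder hg0, leadExp_transferOrder hf0] at hgl
    exact ⟨g, by simpa using hsubU (transferOrder m) hgG, hg0, hgl⟩
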